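/- Let F be a field, m ≥ 1, A, B : Matrix (Fin m) (Fin m × Fin m) F, and let Q_A, Q_B, g be invertible m×m matrices over F with B = τ(g, A). Set Ā = τ(Q_A, A), B̄ = τ(Q_B, B), D_A = (Q_A⁻¹)ᵗ * T̃r(A^t̄ A) * Q_A⁻¹ and D_B = (Q_B⁻¹)ᵗ * T̃r(B^t̄ B) * Q_B⁻¹. Then g₀ := Q_B * g * Q_A⁻¹ satisfies B̄ = τ(g₀, Ā) and g₀ᵗ * D_B * g₀ = D_A. (Forward direction of Theorem 2 with explicit witness.) -/
import Mathlib

open Matrix Kronecker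

/-- The `i`-th block of a matrix of structure constants. -/
def blk {F : Type*} {m : ℕ} (A : Matrix (Fin m) (Fin m × Fin m) F) (i : Fin m) :
    Matrix (Fin m) (Fin m) F := fun a b => A a (i, b)

/-- The trace form `T̃r(Aᵗ̄A)` of a matrix of structure constants. -/
def trForm {F : Type*} [Field F] {m : ℕ} (A : Matrix (Fin m) (Fin m × Fin m) F) :
    Matrix (Fin m) (Fin m) F := fun i j => (blk A i * blk A j).trace

/-- The action `τ(g, A) = g * A * (g⁻¹ ⊗ g⁻¹)` on matrices of structure constants. -/
noncomputable def tau {F : Type*} [Field F] {m : ℕ} (g : Matrix (Fin m) (Fin m) F)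
    (A : Matrix (Fin m) (Fin m × Fin m) F) : Matrix (Fin m) (Fin m × Fin m) F :=
  g * A * (g⁻¹ ⊗ₖ g⁻¹)

lemma tau_mul {F : Type*} [Field F] {m : ℕ} (g h : Matrix (Fin m) (Fin m) F)
    (A : Matrix (Fin m) (Fin m × Fin m) F) : tau (g * h) A = tau g (tau h A) := by
  simp only [tau, Matrix.mul_inv_rev, ← Matrix.mul_kronecker_mul, Matrix.mul_assoc]

lemma blk_tau {F : Type*} [Field F] {m : ℕ} (g : Matrix (Fin m) (Fin m) F)
    (A : Matrix (Fin m) (Fin m × Fin m) F) (i : Fin m) :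
    blk (tau g A) i = ∑ j, g⁻¹ j i • (g * blk A j * g⁻¹) := by
  ext a b
  simp only [blk, tau, Matrix.mul_apply, Matrix.kroneckerMap_apply, Matrix.sum_apply,
    Matrix.smul_apply, smul_eq_mul, Fintype.sum_prod_type, Finset.mul_sum, Finset.sum_mul]
  refine Finset.sum_congr rfl fun j _ => ?_
  refine Finset.sum_congr rfl fun d _ => ?_
  refine Finset.sum_congr rfl fun c _ => ?_
  ring

lemma trForm_tau {F : Type*} [Field F] {m : ℕ} (g : Matrix (Fin m) (Fin m) F)
    (hg : IsUnit g) (A : Matrix (Fin m) (Fin m × Fin m) F) :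
    trForm (tau g A) = (g⁻¹)ᵀ * trForm A * g⁻¹ := by
  have hgi : g⁻¹ * g = 1 := Matrix.nonsing_inv_mul g ((Matrix.isUnit_iff_isUnit_det g).mp hg)
  have key : ∀ X Y : Matrix (Fin m) (Fin m) F,
      (g * X * g⁻¹ * (g * Y * g⁻¹)).trace = (X * Y).trace := by
    intro X Y
    have h1 : g * X * g⁻¹ * (g * Y * g⁻¹) = g * (X * Y) * g⁻¹ := by
      simp only [← Matrix.mul_assoc]
      rw [Matrix.mul_assoc (g * X) g⁻¹ g, hgi, Matrix.mul_one]
    rw [h1, Matrix.trace_mul_cycle, ← Matrix.mul_assoc, hgi, Matrix.one_mul]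
  ext i k
  simp only [trForm, blk_tau, Matrix.mul_apply, Matrix.transpose_apply,
    Matrix.sum_mul, Matrix.mul_sum, Matrix.trace_sum, smul_mul_assoc, mul_smul_comm,
    Matrix.trace_smul, smul_smul, Finset.sum_mul, Finset.mul_sum, Finset.smul_sum]
  refine Finset.sum_congr rfl fun j _ => Finset.sum_congr rfl fun l _ => ?_
  rw [key]
  simp only [smul_eq_mul, trForm]
  rw [Matrix.trace_mul_comm]
  ring

theorem stmt_8 (F : Type*) [Field F] (m : ℕ) (hm : 1 ≤ m)
    (A B : Matrix (Fin m) (Fin m × Fin m) F)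
    (QA QB g : Matrix (Fin m) (Fin m) F)
    (hQA : IsUnit QA) (hQB : IsUnit QB) (hg : IsUnit g)
    (hB : B = tau g A)
    (Abar Bbar : Matrix (Fin m) (Fin m × Fin m) F)
    (hAbar : Abar = tau QA A) (hBbar : Bbar = tau QB B)
    (DA DB : Matrix (Fin m) (Fin m) F)
    (hDA : DA = (QA⁻¹)ᵀ * trForm A * QA⁻¹) (hDB : DB = (QB⁻¹)ᵀ * trForm B * QB⁻¹) :
    Bbar = tau (QB * g * QA⁻¹) Abar ∧ (QB * g * QA⁻¹)ᵀ * DB * (QB * g * QA⁻¹) = DA := by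
  have hQAi : QA⁻¹ * QA = 1 := Matrix.nonsing_inv_mul QA ((Matrix.isUnit_iff_isUnit_det QA).mp hQA)
  have hQBi : QB⁻¹ * QB = 1 := Matrix.nonsing_inv_mul QB ((Matrix.isUnit_iff_isUnit_det QB).mp hQB)
  have hgi : g⁻¹ * g = 1 := Matrix.nonsing_inv_mul g ((Matrix.isUnit_iff_isUnit_det g).mp hg)
  constructor
  · rw [hBbar, hAbar, hB, ← tau_mul, ← tau_mul]
    congr 1
    rw [Matrix.mul_assoc, hQAi, Matrix.mul_one]
  · rw [hDA, hDB, hB, trForm_tau g hg]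
    simp only [Matrix.transpose_mul, Matrix.mul_assoc]
    rw [← Matrix.mul_assoc QB⁻¹ QB, hQBi, Matrix.one_mul,
      ← Matrix.mul_assoc g⁻¹ g, hgi, Matrix.one_mul,
      ← Matrix.mul_assoc QBᵀ QB⁻¹ᵀ, ← Matrix.transpose_mul QB⁻¹ QB, hQBi,
        Matrix.transpose_one, Matrix.one_mul,
      ← Matrix.mul_assoc gᵀ g⁻¹ᵀ, ← Matrix.transpose_mul g⁻¹ g, hgi,
        Matrix.transpose_one, Matrix.one_mul]
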